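/- Let f : 2^E → ℝ be a monotone submodular function with f(∅) = 0 on a finite ground set E. Let O = {o₁,…,o_k} ⊆ E and R = {r₁,…,r_k} ⊆ E be sequences with prefix sets R_i = {r₁,…,r_i} (R₀ = ∅), and suppose f(R_i) − f(R_{i−1}) ≥ f(R_{i−1} ∪ {o_i}) − f(R_{i−1}) for all 1 ≤ i ≤ k. Then 2·f(R_k) ≥ f(O) + Σ_{i : r_i = o_i} (f(R_{i−1} ∪ {o_i}) − f(R_{i−1})). In particular f(R_k) ≥ f(O)/2. -/
import Mathlib


/-- Greedy-type 1/2-approximation with bonus for taken optimum elements. -/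
theorem greedy_half_approx_with_bonus {E : Type*} [DecidableEq E] (f : Finset E → ℝ)
    (hsub : ∀ S T : Finset E, f S + f T ≥ f (S ∪ T) + f (S ∩ T))
    (hmono : ∀ S T : Finset E, S ⊆ T → f S ≤ f T)
    (hnorm : f ∅ = 0)
    (k : ℕ) (o r : ℕ → E)
    (hoinj : Set.InjOn o (Set.Iio k))
    (O : Finset E) (hO : O = (Finset.range k).image o)
    (R : ℕ → Finset E) (hR : ∀ i, R i = (Finset.range i).image r)
    (hgain : ∀ i < k, f (R (i + 1)) - f (R i) ≥ f (insert (o i) (R i)) - f (R i)) :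
    (2 * f (R k) ≥ f O +
      ∑ i ∈ (Finset.range k).filter (fun i => r i = o i),
        (f (insert (o i) (R i)) - f (R i))) ∧
    f (R k) ≥ f O / 2 := by
  classical
  have hRmono : ∀ i j : ℕ, i ≤ j → R i ⊆ R j := by
    intro i j hij
    rw [hR, hR]
    exact Finset.image_subset_image (Finset.range_subset_range.2 hij)
  set m : ℕ → ℝ := fun i => f (insert (o i) (R i)) - f (R i) with hm
  have hm0 : ∀ i, 0 ≤ m i := by
    intro i
    have := hmono (R i) (insert (o i) (R i)) (Finset.subset_insert _ _)
    simp only [hm]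
    linarith
  have hR0 : f (R 0) = 0 := by
    rw [hR]; simpa using hnorm
  -- telescoping sum of greedy gains
  have htel : ∑ i ∈ Finset.range k, (f (R (i + 1)) - f (R i)) = f (R k) := by
    rw [Finset.sum_range_sub (fun i => f (R i)), hR0, sub_zero]
  have hsumle : ∑ i ∈ Finset.range k, m i ≤ f (R k) := by
    rw [← htel]
    apply Finset.sum_le_sum
    intro i hi
    exact hgain i (Finset.mem_range.1 hi)
  -- key induction
  have key : ∀ j, j ≤ k → f (R k ∪ (Finset.range j).image o) ≤ f (R k) +
      ∑ i ∈ (Finset.range j).filter (fun i => ¬ r i = o i), m i := by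
    intro j hj
    induction j with
    | zero => simp
    | succ j ih =>
      have hjk : j < k := hj
      have ih' := ih (Nat.le_of_succ_le hj)
      set B : Finset E := R k ∪ (Finset.range j).image o with hB
      have hRjB : R j ⊆ B := (hRmono j k (Nat.le_of_succ_le hj)).trans Finset.subset_union_left
      have hsplit : (Finset.range (j+1)).filter (fun i => ¬ r i = o i) =
          if ¬ r j = o j then insert j ((Finset.range j).filter (fun i => ¬ r i = o i))
          else (Finset.range j).filter (fun i => ¬ r i = o i) := by
        rw [Finset.range_add_one, Finset.filter_insert]
      have himg : (Finset.range (j+1)).image o = insert (o j) ((Finset.range j).image o) := by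
        rw [Finset.range_add_one, Finset.image_insert]
      by_cases hcase : r j = o j
      · have ho : o j ∈ R k := by
          rw [hR]
          exact Finset.mem_image.2 ⟨j, Finset.mem_range.2 hjk, hcase⟩
        have heq : R k ∪ (Finset.range (j+1)).image o = B := by
          rw [himg, hB, Finset.union_insert, Finset.insert_eq_self.2 (Finset.mem_union_left _ ho)]
        rw [heq, hsplit, if_neg (by simp [hcase])]
        exact ih'
      · have hAB := hsub (insert (o j) (R j)) B
        have hmon : f (R j) ≤ f (insert (o j) (R j) ∩ B) := by
          apply hmono
          exact Finset.subset_inter (Finset.subset_insert _ _) hRjB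
        have hunion : insert (o j) (R j) ∪ B = insert (o j) B := by
          rw [Finset.insert_union, Finset.union_eq_right.2 hRjB]
        rw [hunion] at hAB
        have hstep : f (insert (o j) B) ≤ f B + m j := by
          simp only [hm]; linarith
        have heq : R k ∪ (Finset.range (j+1)).image o = insert (o j) B := by
          rw [himg, hB, Finset.union_insert]
        rw [heq, hsplit, if_pos hcase, Finset.sum_insert (by simp)]
        linarith
  have hOle : f O ≤ f (R k) + ∑ i ∈ (Finset.range k).filter (fun i => ¬ r i = o i), m i := by
    have h1 : f O ≤ f (R k ∪ (Finset.range k).image o) := by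
      rw [hO]
      exact hmono _ _ Finset.subset_union_right
    exact h1.trans (key k le_rfl)
  have hfilter : ∑ i ∈ (Finset.range k).filter (fun i => r i = o i), m i +
      ∑ i ∈ (Finset.range k).filter (fun i => ¬ r i = o i), m i = ∑ i ∈ Finset.range k, m i :=
    Finset.sum_filter_add_sum_filter_not _ _ _
  have hbonus0 : 0 ≤ ∑ i ∈ (Finset.range k).filter (fun i => r i = o i), m i :=
    Finset.sum_nonneg fun i _ => hm0 i
  constructor
  · simp only [hm] at hfilter hOle hsumle hbonus0 ⊢
    linarith
  · simp only [hm] at hfilter hOle hsumle hbonus0 ⊢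
    linarith
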